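/- arXiv:1404.6022 — 3 statements merged into one kernel-verified Lean document; each statement's English description precedes it below -/
import Mathlib

section
/- (Gallagher's larger sieve.) There is an absolute constant C > 0 such that for every real α ∈ (0,1), every integer N ≥ 2, and every nonempty subset A ⊆ [N]: if Σ_{p ≤ N^α, p prime} (log p) / |A mod p| > log N + 1, then |A| ≤ C · N^α. -/
/-- `A` reduced modulo `p`. -/
def modImage (A : Finset ℕ) (p : ℕ) : Finset (ZMod p) :=
  A.image (fun a => (Nat.cast a : ZMod p))

/-- The primes `p ≤ P` (for a real bound `P ≥ 0`). -/
noncomputable def primesUpTo (P : ℝ) : Finset ℕ :=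
  (Finset.range (⌊P⌋₊ + 1)).filter Nat.Prime

lemma sum_log_primeFactors_le (d : ℕ) (hd : d ≠ 0) :
    ∑ p ∈ d.primeFactors, Real.log p ≤ Real.log d := by
  rw [← Real.log_prod (fun p hp => by
    exact_mod_cast (Nat.prime_of_mem_primeFactors hp).ne_zero)]
  rw [← Nat.cast_prod]
  apply Real.log_le_log
  · exact_mod_cast Nat.pos_of_ne_zero (fun h => by
      have := Nat.prod_primeFactors_dvd d
      rw [h] at this
      exact hd (Nat.eq_zero_of_zero_dvd this))
  · exact_mod_cast Nat.le_of_dvd (Nat.pos_of_ne_zero hd) (Nat.prod_primeFactors_dvd d)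

lemma cheby (n : ℕ) :
    ∑ p ∈ (Finset.range (n+1)).filter Nat.Prime, Real.log p ≤ n * Real.log 4 := by
  have h1 : ∑ p ∈ (Finset.range (n+1)).filter Nat.Prime, Real.log p
      = Real.log ((primorial n : ℕ) : ℝ) := by
    rw [← Real.log_prod (fun p hp => by
      exact_mod_cast (Finset.mem_filter.1 hp).2.ne_zero)]
    rw [← Nat.cast_prod, primorial]
  rw [h1]
  calc Real.log ((primorial n : ℕ) : ℝ) ≤ Real.log (((4:ℕ)^n : ℕ) : ℝ) := by
        apply Real.log_le_log (by exact_mod_cast primorial_pos n)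
        exact_mod_cast primorial_le_4_pow n
    _ = n * Real.log 4 := by
        push_cast
        rw [Real.log_pow]

lemma cs_count (A : Finset ℕ) (p : ℕ) :
    (A.card : ℝ)^2 ≤ ((modImage A p).card : ℝ) *
      (((A ×ˢ A).filter (fun ab => ((ab.1 : ZMod p)) = (ab.2 : ZMod p))).card : ℝ) := by
  classical
  set f : ℕ → ZMod p := fun a => (a : ZMod p) with hf
  have hcard : A.card = ∑ r ∈ A.image f, (A.filter (fun a => f a = r)).card :=
    Finset.card_eq_sum_card_image f A
  have hCS : ((A.card : ℝ))^2 ≤ ((A.image f).card : ℝ) *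
      ∑ r ∈ A.image f, ((A.filter (fun a => f a = r)).card : ℝ)^2 := by
    have := sq_sum_le_card_mul_sum_sq (s := A.image f)
      (f := fun r => ((A.filter (fun a => f a = r)).card : ℝ))
    rw [hcard]
    push_cast
    exact this
  have hpair : (((A ×ˢ A).filter (fun ab => f ab.1 = f ab.2)).card : ℝ)
      = ∑ r ∈ A.image f, ((A.filter (fun a => f a = r)).card : ℝ)^2 := by
    rw [Finset.card_filter]
    push_cast
    rw [Finset.sum_product]
    have step : ∀ a ∈ A, (∑ b ∈ A, if f a = f b then (1:ℝ) else 0)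
        = ((A.filter (fun b => f b = f a)).card : ℝ) := by
      intro a _
      rw [Finset.card_filter]
      push_cast
      exact Finset.sum_congr rfl (fun b _ => by simp [eq_comm])
    rw [Finset.sum_congr rfl step]
    have hc := Finset.sum_comp (s := A) (fun r => ((A.filter (fun b => f b = r)).card : ℝ)) f
    rw [hc]
    exact Finset.sum_congr rfl (fun r _ => by rw [nsmul_eq_mul]; ring)
  show ((A.card:ℝ))^2 ≤ ((A.image f).card : ℝ) *
      (((A ×ˢ A).filter (fun ab => f ab.1 = f ab.2)).card : ℝ)
  rw [hpair]
  exact hCS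

theorem gallagher_larger_sieve :
    ∃ C : ℝ, C > 0 ∧ ∀ α : ℝ, 0 < α → α < 1 → ∀ N : ℕ, 2 ≤ N →
      ∀ A : Finset ℕ, A ⊆ Finset.Icc 1 N → A.Nonempty →
        (∑ p ∈ primesUpTo ((N : ℝ) ^ α),
            Real.log p / ((modImage A p).card : ℝ)) > Real.log N + 1 →
        (A.card : ℝ) ≤ C * (N : ℝ) ^ α := by
  classical
  refine ⟨Real.log 4, Real.log_pos (by norm_num), ?_⟩
  intro α hα0 hα1 N hN A hAsub hAne hS
  set Q : ℝ := (N : ℝ) ^ α with hQ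
  set P : Finset ℕ := primesUpTo Q with hPdef
  have hQ0 : (0:ℝ) ≤ Q := by positivity
  set Z : ℝ := (A.card : ℝ) with hZ
  have hZpos : 0 < Z := by
    rw [hZ]; exact_mod_cast Finset.card_pos.2 hAne
  have hNpos : (1:ℝ) ≤ (N:ℝ) := by exact_mod_cast Nat.one_le_of_lt hN
  have hlogN : 0 ≤ Real.log N := Real.log_nonneg hNpos
  -- membership facts for A
  have hmem : ∀ a ∈ A, 1 ≤ a ∧ a ≤ N := fun a ha => Finset.mem_Icc.1 (hAsub ha)
  -- primes in P
  have hPprime : ∀ p ∈ P, p.Prime := fun p hp => (Finset.mem_filter.1 hp).2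
  have hlogp : ∀ p ∈ P, 0 ≤ Real.log p := fun p hp =>
    Real.log_nonneg (by exact_mod_cast (hPprime p hp).one_lt.le)
  -- counts
  set cnt : ℕ → ℕ := fun p =>
    ((A ×ˢ A).filter (fun ab => ((ab.1 : ZMod p)) = (ab.2 : ZMod p))).card with hcnt
  set off : ℕ → ℕ := fun p =>
    (A.offDiag.filter (fun ab => ((ab.1 : ZMod p)) = (ab.2 : ZMod p))).card with hoff
  have hsplit : ∀ p, (cnt p : ℝ) ≤ Z + off p := by
    intro p
    have h1 : cnt p ≤ A.card + off p := by
      have : (A ×ˢ A).filter (fun ab => ((ab.1 : ZMod p)) = (ab.2 : ZMod p)) =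
          (A.diag.filter (fun ab => ((ab.1 : ZMod p)) = (ab.2 : ZMod p))) ∪
          (A.offDiag.filter (fun ab => ((ab.1 : ZMod p)) = (ab.2 : ZMod p))) := by
        rw [← Finset.filter_union, Finset.diag_union_offDiag]
      calc cnt p ≤ (A.diag.filter _).card + (A.offDiag.filter _).card := by
            rw [hcnt]; simp only []; rw [this]; exact Finset.card_union_le _ _
        _ ≤ A.card + off p := by
            apply Nat.add_le_add _ le_rfl
            exact le_trans (Finset.card_filter_le _ _) (le_of_eq (Finset.diag_card _))
    show (cnt p : ℝ) ≤ (A.card : ℝ) + (off p : ℝ)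
    exact_mod_cast h1
  -- image nonempty
  have himg_pos : ∀ p : ℕ, 0 < ((modImage A p).card : ℝ) := by
    intro p
    have : (modImage A p).Nonempty := hAne.image _
    exact_mod_cast Finset.card_pos.2 this
  -- per-prime inequality
  have hper : ∀ p ∈ P, Z^2 * (Real.log p / ((modImage A p).card : ℝ))
      ≤ Real.log p * (Z + off p) := by
    intro p hp
    have hm := himg_pos p
    have h1 : Z^2 / ((modImage A p).card : ℝ) ≤ (cnt p : ℝ) := by
      rw [div_le_iff₀ hm]
      calc Z^2 ≤ ((modImage A p).card : ℝ) * (cnt p : ℝ) := cs_count A p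
        _ = (cnt p : ℝ) * ((modImage A p).card : ℝ) := mul_comm _ _
    calc Z^2 * (Real.log p / ((modImage A p).card : ℝ))
        = (Z^2 / ((modImage A p).card : ℝ)) * Real.log p := by ring
      _ ≤ (cnt p : ℝ) * Real.log p :=
          mul_le_mul_of_nonneg_right h1 (hlogp p hp)
      _ = Real.log p * (cnt p : ℝ) := mul_comm _ _
      _ ≤ Real.log p * (Z + off p) :=
          mul_le_mul_of_nonneg_left (hsplit p) (hlogp p hp)
  -- sum the per-prime inequality
  have hsum1 : Z^2 * (∑ p ∈ P, Real.log p / ((modImage A p).card : ℝ))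
      ≤ Z * (∑ p ∈ P, Real.log p) + ∑ p ∈ P, Real.log p * (off p : ℝ) := by
    rw [Finset.mul_sum]
    calc ∑ p ∈ P, Z^2 * (Real.log p / ((modImage A p).card : ℝ))
        ≤ ∑ p ∈ P, Real.log p * (Z + off p) := Finset.sum_le_sum hper
      _ = Z * (∑ p ∈ P, Real.log p) + ∑ p ∈ P, Real.log p * (off p : ℝ) := by
          rw [Finset.mul_sum, ← Finset.sum_add_distrib]
          exact Finset.sum_congr rfl (fun p _ => by ring)
  -- Chebyshev bound
  have htheta : ∑ p ∈ P, Real.log p ≤ Real.log 4 * Q := by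
    calc ∑ p ∈ P, Real.log p ≤ (⌊Q⌋₊ : ℝ) * Real.log 4 := cheby ⌊Q⌋₊
      _ ≤ Q * Real.log 4 := by
          apply mul_le_mul_of_nonneg_right (Nat.floor_le hQ0)
          exact Real.log_nonneg (by norm_num)
      _ = Real.log 4 * Q := mul_comm _ _
  -- off-diagonal bound
  have hkey : ∀ ab ∈ A.offDiag,
      ∑ p ∈ P.filter (fun p => ((ab.1 : ZMod p)) = (ab.2 : ZMod p)), Real.log p
        ≤ Real.log N := by
    intro ab hab
    obtain ⟨ha, hb, hne⟩ := Finset.mem_offDiag.1 hab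
    set a := ab.1
    set b := ab.2
    set d : ℕ := max a b - min a b with hd
    have hdne : d ≠ 0 := by
      rw [hd]
      have : min a b < max a b := by
        rcases le_total a b with h | h
        · rw [min_eq_left h, max_eq_right h]; exact lt_of_le_of_ne h hne
        · rw [min_eq_right h, max_eq_left h]; exact lt_of_le_of_ne h (Ne.symm hne)
      omega
    have hdN : d ≤ N := by
      have h1 := (hmem a ha).2
      have h2 := (hmem b hb).2
      rw [hd]
      rcases le_total a b with h | h
      · rw [max_eq_right h]; omega
      · rw [max_eq_left h]; omega
    have hsub : P.filter (fun p => ((a : ZMod p)) = (b : ZMod p)) ⊆ d.primeFactors := by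
      intro p hp
      obtain ⟨hpP, hcond⟩ := Finset.mem_filter.1 hp
      have hprime := hPprime p hpP
      have hmod : a ≡ b [MOD p] := (ZMod.natCast_eq_natCast_iff a b p).1 hcond
      have hdvd : p ∣ d := by
        rw [hd]
        rcases le_total a b with h | h
        · rw [max_eq_right h, min_eq_left h]
          exact (Nat.modEq_iff_dvd' h).1 hmod
        · rw [max_eq_left h, min_eq_right h]
          exact (Nat.modEq_iff_dvd' h).1 hmod.symm
      exact Nat.mem_primeFactors.2 ⟨hprime, hdvd, hdne⟩
    calc ∑ p ∈ P.filter (fun p => ((a : ZMod p)) = (b : ZMod p)), Real.log p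
        ≤ ∑ p ∈ d.primeFactors, Real.log p := by
          apply Finset.sum_le_sum_of_subset_of_nonneg hsub
          intro p hp _
          exact Real.log_nonneg (by exact_mod_cast (Nat.prime_of_mem_primeFactors hp).one_lt.le)
      _ ≤ Real.log d := sum_log_primeFactors_le d hdne
      _ ≤ Real.log N := Real.log_le_log (by exact_mod_cast Nat.pos_of_ne_zero hdne)
          (by exact_mod_cast hdN)
  have hswap : ∑ p ∈ P, Real.log p * (off p : ℝ) ≤ Z^2 * Real.log N := by
    have h1 : ∀ p ∈ P, Real.log p * (off p : ℝ)
        = ∑ ab ∈ A.offDiag, (if ((ab.1 : ZMod p)) = (ab.2 : ZMod p) then Real.log p else 0) := by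
      intro p _
      rw [← Finset.sum_filter]
      rw [Finset.sum_const, nsmul_eq_mul, mul_comm]
    calc ∑ p ∈ P, Real.log p * (off p : ℝ)
        = ∑ p ∈ P, ∑ ab ∈ A.offDiag,
            (if ((ab.1 : ZMod p)) = (ab.2 : ZMod p) then Real.log p else 0) :=
          Finset.sum_congr rfl h1
      _ = ∑ ab ∈ A.offDiag, ∑ p ∈ P,
            (if ((ab.1 : ZMod p)) = (ab.2 : ZMod p) then Real.log p else 0) :=
          Finset.sum_comm
      _ = ∑ ab ∈ A.offDiag,
            ∑ p ∈ P.filter (fun p => ((ab.1 : ZMod p)) = (ab.2 : ZMod p)), Real.log p :=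
          Finset.sum_congr rfl (fun ab _ => (Finset.sum_filter _ _).symm)
      _ ≤ ∑ _ab ∈ A.offDiag, Real.log N := Finset.sum_le_sum hkey
      _ = (A.offDiag.card : ℝ) * Real.log N := by rw [Finset.sum_const, nsmul_eq_mul]
      _ ≤ Z^2 * Real.log N := by
          apply mul_le_mul_of_nonneg_right _ hlogN
          rw [hZ]
          have h2 : A.offDiag.card ≤ A.card ^ 2 := by
            rw [Finset.offDiag_card, sq]
            omega
          calc (A.offDiag.card : ℝ) ≤ ((A.card ^ 2 : ℕ) : ℝ) := by exact_mod_cast h2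
            _ = (A.card : ℝ)^2 := by push_cast; ring
  -- combine
  have hfinal : Z^2 * (Real.log N + 1) < Z * (Real.log 4 * Q) + Z^2 * Real.log N := by
    calc Z^2 * (Real.log N + 1)
        < Z^2 * (∑ p ∈ P, Real.log p / ((modImage A p).card : ℝ)) := by
          apply mul_lt_mul_of_pos_left hS (by positivity)
      _ ≤ Z * (∑ p ∈ P, Real.log p) + ∑ p ∈ P, Real.log p * (off p : ℝ) := hsum1
      _ ≤ Z * (Real.log 4 * Q) + Z^2 * Real.log N := by
          apply add_le_add _ hswap
          exact mul_le_mul_of_nonneg_left htheta hZpos.le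
  nlinarith [hZpos, hfinal]
end

section
/- (Uniform fiber property.) Let α ∈ (0,1) and c > 0 be reals, let p be a prime, and let A be a finite nonempty set of integers. For each residue r modulo p write x_r = |{a ∈ A : a ≡ r (mod p)}|. Assume |A mod p| ≤ αp and Σ_{r mod p} x_r² ≤ (1/α + c)·|A|²/p. Then |A mod p| ≥ α(1 − cα)·p, and moreover the number of residues r ∈ A mod p with x_r < (1/α − c^{1/3})·|A|/p is at most c^{1/3}·p. -/
/-- A finite set of integers reduced modulo `p`. -/
def modImageZ (A : Finset ℤ) (p : ℕ) : Finset (ZMod p) :=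
  A.image (fun a => (Int.cast a : ZMod p))

/-- The number of elements of `A` congruent to `r` modulo `p`. -/
def fiberCardZ (A : Finset ℤ) (p : ℕ) (r : ZMod p) : ℕ :=
  (A.filter (fun a => (Int.cast a : ZMod p) = r)).card

set_option maxHeartbeats 1600000 in
theorem uniform_fiber_property_aux (α : ℝ) (hα0 : 0 < α) (hα1 : α < 1)
    (c : ℝ) (hc : 0 < c) (p : ℕ) (hp : p.Prime)
    (A : Finset ℤ) (hA : A.Nonempty)
    (hsize : ((modImageZ A p).card : ℝ) ≤ α * p)
    (hfib : (∑ r ∈ Finset.range p, ((fiberCardZ A p (Nat.cast r) : ℝ)) ^ 2) ≤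
      (1 / α + c) * (A.card : ℝ) ^ 2 / p) :
    ((modImageZ A p).card : ℝ) ≥ α * (1 - c * α) * p ∧
      ∀ B : Finset (ZMod p),
        (∀ r, r ∈ B ↔ r ∈ modImageZ A p ∧
          (fiberCardZ A p r : ℝ) < (1 / α - c ^ ((1 : ℝ) / 3)) * (A.card : ℝ) / p) →
        (B.card : ℝ) ≤ c ^ ((1 : ℝ) / 3) * p := by
  haveI : NeZero p := ⟨hp.pos.ne'⟩
  set S := modImageZ A p with hS
  set x : ZMod p → ℝ := fun r => (fiberCardZ A p r : ℝ) with hx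
  set n : ℝ := (A.card : ℝ) with hn
  have hp0 : (0:ℝ) < p := by exact_mod_cast hp.pos
  have hn0 : (0:ℝ) < n := by rw [hn]; exact_mod_cast hA.card_pos
  -- sums over range p equal sums over univ
  have hbij : ∀ g : ZMod p → ℝ,
      ∑ r ∈ Finset.range p, g ((r : ℕ) : ZMod p) = ∑ r : ZMod p, g r := by
    intro g
    apply Finset.sum_nbij' (fun i => ((i : ℕ) : ZMod p)) (fun r => r.val)
    · intro a _; exact Finset.mem_univ _
    · intro r _; exact Finset.mem_range.mpr (ZMod.val_lt r)
    · intro a ha; exact ZMod.val_cast_of_lt (Finset.mem_range.mp ha)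
    · intro r _; exact ZMod.natCast_rightInverse r
    · intro a _; rfl
  -- fibers vanish off the image
  have hzero : ∀ r : ZMod p, r ∉ S → x r = 0 := by
    intro r hr
    have : A.filter (fun a => (Int.cast a : ZMod p) = r) = ∅ := by
      rw [Finset.filter_eq_empty_iff]
      intro a ha hcast
      exact hr (Finset.mem_image.mpr ⟨a, ha, hcast⟩)
    simp [hx, fiberCardZ, this]
  -- total fiber count
  have hsumnat : A.card = ∑ r : ZMod p, fiberCardZ A p r :=
    Finset.card_eq_sum_card_fiberwise (fun a _ => Finset.mem_univ _)
  have hsum : ∑ r : ZMod p, x r = n := by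
    rw [hn, hsumnat]; push_cast; rfl
  have hsumS : ∑ r ∈ S, x r = n := by
    rw [← hsum]
    exact Finset.sum_subset (Finset.subset_univ S) (fun r _ hr => hzero r hr)
  have hsqS : ∑ r ∈ S, x r ^ 2 = ∑ r : ZMod p, x r ^ 2 :=
    Finset.sum_subset (Finset.subset_univ S)
      (fun r _ hr => by rw [hzero r hr]; ring)
  have hfib' : ∑ r ∈ S, x r ^ 2 ≤ (1 / α + c) * n ^ 2 / p := by
    rw [hsqS, ← hbij (fun r => x r ^ 2)]
    exact hfib
  have hxnn : ∀ r ∈ S, (0:ℝ) ≤ x r := fun r _ => Nat.cast_nonneg _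
  have hk0 : (0:ℝ) ≤ (S.card : ℝ) := Nat.cast_nonneg _
  -- Cauchy-Schwarz
  have hCS : n ^ 2 ≤ (S.card : ℝ) * ((1 / α + c) * n ^ 2 / p) := by
    calc n ^ 2 = (∑ r ∈ S, x r) ^ 2 := by rw [hsumS]
      _ ≤ (S.card : ℝ) * ∑ r ∈ S, x r ^ 2 := sq_sum_le_card_mul_sum_sq
      _ ≤ (S.card : ℝ) * ((1 / α + c) * n ^ 2 / p) := by
          exact mul_le_mul_of_nonneg_left hfib' hk0
  have hu : α * (1/α) = 1 := mul_one_div_cancel hα0.ne'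
  have hk1 : (p:ℝ) ≤ (S.card : ℝ) * (1 / α + c) := by
    have h := mul_le_mul_of_nonneg_right hCS hp0.le
    have hre : (S.card : ℝ) * ((1 / α + c) * n ^ 2 / p) * p
        = (S.card : ℝ) * (1 / α + c) * n ^ 2 := by field_simp
    rw [hre] at h
    nlinarith [mul_pos hn0 hn0]
  have part1 : ((modImageZ A p).card : ℝ) ≥ α * (1 - c * α) * p := by
    rw [← hS]
    nlinarith [mul_pos hα0 hp0, sq_nonneg (c*α), mul_pos hc hα0]
  refine ⟨part1, ?_⟩
  intro B hB
  set t : ℝ := c ^ ((1:ℝ)/3) with htdef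
  have ht0 : 0 < t := Real.rpow_pos_of_pos hc _
  have ht3 : t ^ (3:ℕ) = c := by
    rw [htdef, ← Real.rpow_natCast (c ^ ((1:ℝ)/3)) 3, ← Real.rpow_mul hc.le]
    norm_num
  clear_value t
  obtain ⟨μ, hμdef⟩ : ∃ μ : ℝ, μ = n / (α * p) := ⟨_, rfl⟩
  have expand : ∑ r ∈ S, (x r - μ)^2
      = (∑ r ∈ S, x r ^ 2) - 2*μ*(∑ r ∈ S, x r) + (S.card : ℝ) * μ^2 := by
    rw [Finset.sum_congr rfl
      (fun r _ => by ring : ∀ r ∈ S, (x r - μ)^2 = x r^2 - 2*μ*x r + μ^2)]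
    rw [Finset.sum_add_distrib, Finset.sum_sub_distrib, ← Finset.mul_sum,
      Finset.sum_const, nsmul_eq_mul]
  have hαp : (0:ℝ) < α * p := mul_pos hα0 hp0
  have hvar : ∑ r ∈ S, (x r - μ)^2 ≤ c * n^2 / p := by
    rw [expand, hsumS]
    have hk : (S.card:ℝ) * μ^2 ≤ (α*p) * μ^2 :=
      mul_le_mul_of_nonneg_right hsize (sq_nonneg μ)
    have he : (α*p) * μ^2 - 2*μ*n = - (1/α) * n^2 / p := by
      rw [hμdef]; field_simp; ring
    have h1 : ∑ r ∈ S, x r ^ 2 - 2*μ*n + (S.card:ℝ)*μ^2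
        ≤ ∑ r ∈ S, x r ^ 2 - 2*μ*n + α*(p:ℝ)*μ^2 := by linarith
    have h2 : ∑ r ∈ S, x r ^ 2 - 2*μ*n + α*(p:ℝ)*μ^2
        = ∑ r ∈ S, x r ^ 2 + (-(1/α)*n^2/(p:ℝ)) := by linarith
    have h3 : ∑ r ∈ S, x r ^ 2 + (-(1/α)*n^2/(p:ℝ))
        ≤ (1/α+c)*n^2/(p:ℝ) + (-(1/α)*n^2/(p:ℝ)) := by linarith [hfib']
    have h4 : (1/α+c)*n^2/(p:ℝ) + (-(1/α)*n^2/(p:ℝ)) = c*n^2/(p:ℝ) := by ring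
    linarith
  have hBsub : B ⊆ S := fun r hr => ((hB r).1 hr).1
  have hone : ∀ r ∈ B, (t*n/p)^2 ≤ (x r - μ)^2 := by
    intro r hr
    have h2 := ((hB r).1 hr).2
    have hkey : (1/α - t) * n / p + t * n / p = μ := by
      rw [hμdef]; field_simp; ring
    have hle : t*n/p ≤ μ - x r := by
      rw [← hkey]; push_cast at h2 ⊢; linarith
    have h0 : (0:ℝ) ≤ t*n/p := by positivity
    calc (t*n/p)^2 ≤ (μ - x r)^2 := pow_le_pow_left₀ h0 hle 2
      _ = (x r - μ)^2 := by ring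
  have hlow : (B.card:ℝ) * (t*n/p)^2 ≤ ∑ r ∈ S, (x r - μ)^2 := by
    calc (B.card:ℝ) * (t*n/p)^2 = ∑ _r ∈ B, (t*n/p)^2 := by
          rw [Finset.sum_const, nsmul_eq_mul]
      _ ≤ ∑ r ∈ B, (x r - μ)^2 := Finset.sum_le_sum hone
      _ ≤ ∑ r ∈ S, (x r - μ)^2 :=
          Finset.sum_le_sum_of_subset_of_nonneg hBsub (fun r _ _ => sq_nonneg _)
  have hfinal : (B.card:ℝ) * (t*n/p)^2 ≤ c * n^2 / p := le_trans hlow hvar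
  have hc' : c = t^3 := ht3.symm
  have hfinal' : (B.card:ℝ) * t^2 * n^2 ≤ t^3 * n^2 * p := by
    rw [hc'] at hfinal
    have h := mul_le_mul_of_nonneg_right hfinal (mul_pos hp0 hp0).le
    calc (B.card:ℝ) * t^2 * n^2 = (B.card:ℝ) * (t*n/p)^2 * ((p:ℝ)*p) := by
          have hp' : (p:ℝ) ≠ 0 := hp0.ne'
          rw [div_pow, mul_pow, mul_assoc (B.card:ℝ), ← pow_two, mul_assoc, div_mul_cancel₀ _ (pow_ne_zero 2 hp')]
      _ ≤ t^3 * n^2 / p * ((p:ℝ)*p) := h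
      _ = t^3 * n^2 * p := by field_simp
  show (B.card:ℝ) ≤ t * p
  have hpos : (0:ℝ) < t^2 * n^2 := mul_pos (pow_pos ht0 2) (pow_pos hn0 2)
  nlinarith [hfinal', hpos]

theorem uniform_fiber_property (α : ℝ) (hα0 : 0 < α) (hα1 : α < 1)
    (c : ℝ) (hc : 0 < c) (p : ℕ) (hp : p.Prime)
    (A : Finset ℤ) (hA : A.Nonempty)
    (hsize : ((modImageZ A p).card : ℝ) ≤ α * p)
    (hfib : (∑ r ∈ Finset.range p, ((fiberCardZ A p (Nat.cast r) : ℝ)) ^ 2) ≤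
      (1 / α + c) * (A.card : ℝ) ^ 2 / p) :
    ((modImageZ A p).card : ℝ) ≥ α * (1 - c * α) * p ∧
      ∀ B : Finset (ZMod p),
        (∀ r, r ∈ B ↔ r ∈ modImageZ A p ∧
          (fiberCardZ A p r : ℝ) < (1 / α - c ^ ((1 : ℝ) / 3)) * (A.card : ℝ) / p) →
        (B.card : ℝ) ≤ c ^ ((1 : ℝ) / 3) * p :=
  uniform_fiber_property_aux α hα0 hα1 c hc p hp A hA hsize hfib
end

section
/- Let k be a positive integer and P ≥ 1 a real. For each prime p ≤ P let h_p, h¹_p, h²_p : {1, ..., p−1} → ℂ be functions with h_p(a) = h¹_p(a) + h²_p(a) for all a. Then 2 · max( ( Σ_{p ≤ P} ( Σ_{a=1}^{p−1} |h¹_p(a)|^{2k} )^{1/(2k−1)} )^{(2k−1)/2k}, ( Σ_{p ≤ P} Σ_{a=1}^{p−1} |h²_p(a)|² )^{1/2} ) ≥ P^{−(k−1)/2k} · ( Σ_{p ≤ P} ( Σ_{a=1}^{p−1} |h_p(a)|² )^{k/(2k−1)} )^{(2k−1)/2k}, where the sums over p run over primes. -/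
private lemma add_rpow_le_two_rpow (x y : ℝ) (hx : 0 ≤ x) (hy : 0 ≤ y) {p : ℝ} (hp : 1 ≤ p) :
    (x + y) ^ p ≤ 2 ^ (p - 1) * (x ^ p + y ^ p) := by
  have h := NNReal.rpow_add_le_mul_rpow_add_rpow x.toNNReal y.toNNReal hp
  have h2 := NNReal.coe_le_coe.mpr h
  push_cast [Real.coe_toNNReal _ hx, Real.coe_toNNReal _ hy] at h2
  exact h2

private lemma sum_add_sq_le (I : Finset ℕ) (u v : ℕ → ℝ) :
    ∑ a ∈ I, (u a + v a) ^ 2 ≤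
      (Real.sqrt (∑ a ∈ I, u a ^ 2) + Real.sqrt (∑ a ∈ I, v a ^ 2)) ^ 2 := by
  have hX : 0 ≤ ∑ a ∈ I, u a ^ 2 := Finset.sum_nonneg fun a _ => sq_nonneg _
  have hY : 0 ≤ ∑ a ∈ I, v a ^ 2 := Finset.sum_nonneg fun a _ => sq_nonneg _
  have hcs := Real.sum_mul_le_sqrt_mul_sqrt I u v
  have expand : ∑ a ∈ I, (u a + v a) ^ 2
      = (∑ a ∈ I, u a ^ 2) + 2 * (∑ a ∈ I, u a * v a) + (∑ a ∈ I, v a ^ 2) := by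
    rw [Finset.mul_sum, ← Finset.sum_add_distrib, ← Finset.sum_add_distrib]
    exact Finset.sum_congr rfl fun a _ => by ring
  rw [expand, add_sq, Real.sq_sqrt hX, Real.sq_sqrt hY]
  have h1 := Real.sqrt_nonneg (∑ a ∈ I, u a ^ 2)
  linarith

private lemma pointwise_bound {X Y W : ℝ} (hX : 0 ≤ X) (hY : 0 ≤ Y) (hW0 : 0 ≤ W)
    (hW : W ≤ (Real.sqrt X + Real.sqrt Y) ^ 2) {t : ℝ} (ht0 : 0 < t) (h2t : 1 ≤ 2 * t) :
    W ^ t ≤ 2 ^ (2 * t - 1) * (X ^ t + Y ^ t) := by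
  have hs : (0:ℝ) ≤ Real.sqrt X + Real.sqrt Y := by positivity
  have step1 : W ^ t ≤ ((Real.sqrt X + Real.sqrt Y) ^ 2) ^ t :=
    Real.rpow_le_rpow hW0 hW ht0.le
  have step2 : ((Real.sqrt X + Real.sqrt Y) ^ 2) ^ t
      = (Real.sqrt X + Real.sqrt Y) ^ (2 * t) := by
    rw [← Real.rpow_natCast (Real.sqrt X + Real.sqrt Y) 2, ← Real.rpow_mul hs]
    norm_num
  have step3 := add_rpow_le_two_rpow (Real.sqrt X) (Real.sqrt Y) (Real.sqrt_nonneg _)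
    (Real.sqrt_nonneg _) h2t
  have e1 : Real.sqrt X ^ (2 * t) = X ^ t := by
    rw [Real.sqrt_eq_rpow, ← Real.rpow_mul hX, show (1/2 : ℝ) * (2 * t) = t by ring]
  have e2 : Real.sqrt Y ^ (2 * t) = Y ^ t := by
    rw [Real.sqrt_eq_rpow, ← Real.rpow_mul hY, show (1/2 : ℝ) * (2 * t) = t by ring]
  calc W ^ t ≤ (Real.sqrt X + Real.sqrt Y) ^ (2 * t) := step2 ▸ step1
    _ ≤ 2 ^ (2 * t - 1) * (Real.sqrt X ^ (2*t) + Real.sqrt Y ^ (2*t)) := step3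
    _ = 2 ^ (2 * t - 1) * (X ^ t + Y ^ t) := by rw [e1, e2]

private lemma power_mean_nat (I : Finset ℕ) (u : ℕ → ℝ) (k : ℕ) (hk : 0 < k) {P : ℝ}
    (hP : 0 ≤ P) (hcard : ((I.card : ℝ)) ≤ P) :
    (∑ a ∈ I, u a ^ 2) ^ k ≤ P ^ (k - 1) * ∑ a ∈ I, u a ^ (2 * k) := by
  obtain ⟨n, rfl⟩ : ∃ n, k = n + 1 := ⟨k - 1, (Nat.succ_pred_eq_of_pos hk).symm⟩
  have hrw : ∑ a ∈ I, u a ^ (2 * (n+1)) = ∑ a ∈ I, (u a ^ 2) ^ (n+1) :=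
    Finset.sum_congr rfl fun a _ => by rw [pow_mul]
  rw [hrw, Nat.add_sub_cancel]
  rcases I.eq_empty_or_nonempty with rfl | hne
  · simp only [Finset.sum_empty]
    rw [zero_pow (Nat.succ_ne_zero n)]
    positivity
  · have hc0 : (0:ℝ) < (I.card : ℝ) := by exact_mod_cast Finset.card_pos.mpr hne
    have hjen := pow_sum_div_card_le_sum_pow (f := fun a => u a ^ 2)
      (s := I) (fun a _ => sq_nonneg _) n
    rw [div_le_iff₀ (by positivity)] at hjen
    calc (∑ a ∈ I, u a ^ 2) ^ (n+1) ≤ (∑ a ∈ I, (u a ^ 2) ^ (n+1)) * (I.card : ℝ) ^ n := hjen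
      _ ≤ (∑ a ∈ I, (u a ^ 2) ^ (n+1)) * P ^ n := by
          apply mul_le_mul_of_nonneg_left (pow_le_pow_left₀ hc0.le hcard n)
          exact Finset.sum_nonneg fun a _ => by positivity
      _ = P ^ n * ∑ a ∈ I, (u a ^ 2) ^ (n+1) := mul_comm _ _

private lemma jensen_rpow (s : Finset ℕ) (Y : ℕ → ℝ) (hY : ∀ p ∈ s, 0 ≤ Y p)
    {t : ℝ} (ht0 : 0 < t) (ht1 : t ≤ 1) :
    ∑ p ∈ s, Y p ^ t ≤ (s.card : ℝ) ^ (1 - t) * (∑ p ∈ s, Y p) ^ t := by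
  have hq : 1 ≤ 1 / t := by rw [le_div_iff₀ ht0]; linarith
  have h0 : ∀ p ∈ s, 0 ≤ Y p ^ t := fun p hp => Real.rpow_nonneg (hY p hp) t
  have big := Real.rpow_sum_le_const_mul_sum_rpow_of_nonneg (s := s)
    (f := fun p => Y p ^ t) hq h0
  have hinner : ∑ p ∈ s, (Y p ^ t) ^ (1/t) = ∑ p ∈ s, Y p :=
    Finset.sum_congr rfl fun p hp => by
      rw [← Real.rpow_mul (hY p hp), mul_one_div, div_self ht0.ne', Real.rpow_one]
  rw [hinner] at big
  have hL0 : 0 ≤ ∑ p ∈ s, Y p ^ t := Finset.sum_nonneg h0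
  have hLrw : ∑ p ∈ s, Y p ^ t = ((∑ p ∈ s, Y p ^ t) ^ (1/t)) ^ t := by
    rw [← Real.rpow_mul hL0, one_div_mul_cancel ht0.ne', Real.rpow_one]
  rw [hLrw]
  calc ((∑ p ∈ s, Y p ^ t) ^ (1/t)) ^ t
      ≤ ((s.card : ℝ) ^ (1/t - 1) * ∑ p ∈ s, Y p) ^ t :=
        Real.rpow_le_rpow (Real.rpow_nonneg hL0 _) big ht0.le
    _ = (s.card : ℝ) ^ (1 - t) * (∑ p ∈ s, Y p) ^ t := by
        rw [Real.mul_rpow (Real.rpow_nonneg (Nat.cast_nonneg _) _)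
          (Finset.sum_nonneg hY), ← Real.rpow_mul (Nat.cast_nonneg _)]
        congr 2
        field_simp

private lemma key_ineq (k : ℕ) (hk : 0 < k) (P : ℝ) (hP : 1 ≤ P)
    (s : Finset ℕ) (I : ℕ → Finset ℕ) (hcard : (s.card : ℝ) ≤ P)
    (hIcard : ∀ p ∈ s, ((I p).card : ℝ) ≤ P)
    (u v : ℕ → ℕ → ℝ) :
    P ^ (-(((k : ℝ) - 1) / (2 * k))) *
        (∑ p ∈ s, (∑ a ∈ I p, (u p a + v p a) ^ 2) ^ ((k : ℝ) / (2 * k - 1))) ^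
          ((2 * (k : ℝ) - 1) / (2 * k)) ≤
      2 * max ((∑ p ∈ s, (∑ a ∈ I p, u p a ^ (2 * k)) ^ ((1 : ℝ) / (2 * k - 1))) ^
          ((2 * (k : ℝ) - 1) / (2 * k)))
        ((∑ p ∈ s, ∑ a ∈ I p, v p a ^ 2) ^ ((1 : ℝ) / 2)) := by
  have hkr1 : (1:ℝ) ≤ (k:ℝ) := by exact_mod_cast hk
  have hr0 : (0:ℝ) < 2 * (k:ℝ) - 1 := by linarith
  have hrne : (2 * (k:ℝ) - 1) ≠ 0 := hr0.ne'
  have hkne : (k:ℝ) ≠ 0 := by positivity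
  have hP0 : (0:ℝ) < P := by linarith
  have ht0 : 0 < ((k:ℝ) / (2 * (k:ℝ) - 1)) := by positivity
  have ht1 : ((k:ℝ) / (2 * (k:ℝ) - 1)) ≤ 1 := by rw [div_le_one hr0]; linarith
  have h2t : 1 ≤ 2 * ((k:ℝ) / (2 * (k:ℝ) - 1)) := by rw [← mul_div_assoc, le_div_iff₀ hr0]; linarith
  have hc0 : (0:ℝ) ≤ ((2 * (k:ℝ) - 1) / (2 * (k:ℝ))) := by apply div_nonneg <;> linarith
  have hD0 : (0:ℝ) ≤ (((k:ℝ) - 1) / (2 * (k:ℝ) - 1)) := by apply div_nonneg <;> linarith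
  have hX0 : ∀ p, (0:ℝ) ≤ (∑ a ∈ I p, u p a ^ 2) :=
    fun p => Finset.sum_nonneg fun a _ => sq_nonneg _
  have hY0 : ∀ p, (0:ℝ) ≤ (∑ a ∈ I p, v p a ^ 2) :=
    fun p => Finset.sum_nonneg fun a _ => sq_nonneg _
  have hA0 : ∀ p, (0:ℝ) ≤ (∑ a ∈ I p, u p a ^ (2 * k)) :=
    fun p => Finset.sum_nonneg fun a _ => (even_two_mul k).pow_nonneg _
  have hW0 : ∀ p, (0:ℝ) ≤ (∑ a ∈ I p, (u p a + v p a) ^ 2) :=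
    fun p => Finset.sum_nonneg fun a _ => sq_nonneg _
  have hSAA0 : (0:ℝ) ≤ (∑ p ∈ s, (∑ a ∈ I p, u p a ^ (2 * k)) ^ ((1:ℝ) / (2 * (k:ℝ) - 1))) := Finset.sum_nonneg fun p _ => Real.rpow_nonneg (hA0 p) _
  have hSYY0 : (0:ℝ) ≤ (∑ p ∈ s, ∑ a ∈ I p, v p a ^ 2) := Finset.sum_nonneg fun p _ => hY0 p
  have hSWW0 : (0:ℝ) ≤ (∑ p ∈ s, (∑ a ∈ I p, (u p a + v p a) ^ 2) ^ ((k:ℝ) / (2 * (k:ℝ) - 1))) := Finset.sum_nonneg fun p _ => Real.rpow_nonneg (hW0 p) _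
  have hM0 : (0:ℝ) ≤ (max ((∑ p ∈ s, (∑ a ∈ I p, u p a ^ (2 * k)) ^ ((1:ℝ) / (2 * (k:ℝ) - 1))) ^ ((2 * (k:ℝ) - 1) / (2 * (k:ℝ)))) ((∑ p ∈ s, ∑ a ∈ I p, v p a ^ 2) ^ ((1:ℝ)/2))) := le_trans (Real.rpow_nonneg hSYY0 _) (le_max_right _ _)
  -- pointwise splitting
  have keyW : ∀ p ∈ s, (∑ a ∈ I p, (u p a + v p a) ^ 2) ^ ((k:ℝ) / (2 * (k:ℝ) - 1)) ≤ 2 ^ (2 * ((k:ℝ) / (2 * (k:ℝ) - 1)) - 1) * ((∑ a ∈ I p, u p a ^ 2) ^ ((k:ℝ) / (2 * (k:ℝ) - 1)) + (∑ a ∈ I p, v p a ^ 2) ^ ((k:ℝ) / (2 * (k:ℝ) - 1))) := fun p _ =>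
    pointwise_bound (hX0 p) (hY0 p) (hW0 p) (sum_add_sq_le (I p) (u p) (v p)) ht0 h2t
  -- power mean in each p
  have keyX : ∀ p ∈ s, (∑ a ∈ I p, u p a ^ 2) ^ ((k:ℝ) / (2 * (k:ℝ) - 1)) ≤ P ^ (((k:ℝ) - 1) / (2 * (k:ℝ) - 1)) * (∑ a ∈ I p, u p a ^ (2 * k)) ^ ((1:ℝ) / (2 * (k:ℝ) - 1)) := by
    intro p hp
    calc (∑ a ∈ I p, u p a ^ 2) ^ ((k:ℝ) / (2 * (k:ℝ) - 1))
        = ((∑ a ∈ I p, u p a ^ 2) ^ k) ^ ((1:ℝ) / (2 * (k:ℝ) - 1)) := by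
          rw [← Real.rpow_natCast (∑ a ∈ I p, u p a ^ 2) k, ← Real.rpow_mul (hX0 p), mul_one_div]
      _ ≤ (P ^ (k - 1) * (∑ a ∈ I p, u p a ^ (2 * k))) ^ ((1:ℝ) / (2 * (k:ℝ) - 1)) :=
          Real.rpow_le_rpow (by positivity)
            (power_mean_nat (I p) (u p) k hk hP0.le (hIcard p hp)) (by positivity)
      _ = P ^ (((k:ℝ) - 1) / (2 * (k:ℝ) - 1)) * (∑ a ∈ I p, u p a ^ (2 * k)) ^ ((1:ℝ) / (2 * (k:ℝ) - 1)) := by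
          rw [Real.mul_rpow (by positivity) (hA0 p), ← Real.rpow_natCast P (k - 1),
            ← Real.rpow_mul hP0.le, Nat.cast_sub (by omega : 1 ≤ k), Nat.cast_one, mul_one_div]
  -- Jensen across primes for the v-part
  have keyY : ∑ p ∈ s, (∑ a ∈ I p, v p a ^ 2) ^ ((k:ℝ) / (2 * (k:ℝ) - 1)) ≤ P ^ (((k:ℝ) - 1) / (2 * (k:ℝ) - 1)) * (∑ p ∈ s, ∑ a ∈ I p, v p a ^ 2) ^ ((k:ℝ) / (2 * (k:ℝ) - 1)) := by
    refine (jensen_rpow s _ (fun p _ => hY0 p) ht0 ht1).trans ?_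
    apply mul_le_mul_of_nonneg_right ?_ (Real.rpow_nonneg hSYY0 _)
    have h1t : (1:ℝ) - ((k:ℝ) / (2 * (k:ℝ) - 1)) = (((k:ℝ) - 1) / (2 * (k:ℝ) - 1)) := by
      rw [eq_div_iff hrne, sub_mul, div_mul_cancel₀ _ hrne]; ring
    rw [h1t]
    exact Real.rpow_le_rpow (Nat.cast_nonneg _) hcard hD0
  -- bounding by M
  have hSA_M : (∑ p ∈ s, (∑ a ∈ I p, u p a ^ (2 * k)) ^ ((1:ℝ) / (2 * (k:ℝ) - 1))) ≤ (max ((∑ p ∈ s, (∑ a ∈ I p, u p a ^ (2 * k)) ^ ((1:ℝ) / (2 * (k:ℝ) - 1))) ^ ((2 * (k:ℝ) - 1) / (2 * (k:ℝ)))) ((∑ p ∈ s, ∑ a ∈ I p, v p a ^ 2) ^ ((1:ℝ)/2))) ^ (2 * ((k:ℝ) / (2 * (k:ℝ) - 1))) := by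
    have hcT : ((2 * (k:ℝ) - 1) / (2 * (k:ℝ))) * (2 * ((k:ℝ) / (2 * (k:ℝ) - 1))) = 1 := by field_simp <;> ring
    have hrw : (∑ p ∈ s, (∑ a ∈ I p, u p a ^ (2 * k)) ^ ((1:ℝ) / (2 * (k:ℝ) - 1))) = ((∑ p ∈ s, (∑ a ∈ I p, u p a ^ (2 * k)) ^ ((1:ℝ) / (2 * (k:ℝ) - 1))) ^ ((2 * (k:ℝ) - 1) / (2 * (k:ℝ)))) ^ (2 * ((k:ℝ) / (2 * (k:ℝ) - 1))) := by
      rw [← Real.rpow_mul hSAA0, hcT, Real.rpow_one]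
    refine hrw.trans_le ?_
    exact Real.rpow_le_rpow (Real.rpow_nonneg hSAA0 _) (le_max_left _ _) (by linarith)
  have hSY_M : (∑ p ∈ s, ∑ a ∈ I p, v p a ^ 2) ^ ((k:ℝ) / (2 * (k:ℝ) - 1)) ≤ (max ((∑ p ∈ s, (∑ a ∈ I p, u p a ^ (2 * k)) ^ ((1:ℝ) / (2 * (k:ℝ) - 1))) ^ ((2 * (k:ℝ) - 1) / (2 * (k:ℝ)))) ((∑ p ∈ s, ∑ a ∈ I p, v p a ^ 2) ^ ((1:ℝ)/2))) ^ (2 * ((k:ℝ) / (2 * (k:ℝ) - 1))) := by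
    have hrw : (∑ p ∈ s, ∑ a ∈ I p, v p a ^ 2) ^ ((k:ℝ) / (2 * (k:ℝ) - 1)) = ((∑ p ∈ s, ∑ a ∈ I p, v p a ^ 2) ^ ((1:ℝ)/2)) ^ (2 * ((k:ℝ) / (2 * (k:ℝ) - 1))) := by
      rw [← Real.rpow_mul hSYY0, show (1/2:ℝ) * (2 * ((k:ℝ) / (2 * (k:ℝ) - 1))) = ((k:ℝ) / (2 * (k:ℝ) - 1)) by ring]
    refine hrw.trans_le ?_
    exact Real.rpow_le_rpow (Real.rpow_nonneg hSYY0 _) (le_max_right _ _) (by linarith)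
  -- main bound on SWW
  have hSW_le : (∑ p ∈ s, (∑ a ∈ I p, (u p a + v p a) ^ 2) ^ ((k:ℝ) / (2 * (k:ℝ) - 1))) ≤ (2 * (max ((∑ p ∈ s, (∑ a ∈ I p, u p a ^ (2 * k)) ^ ((1:ℝ) / (2 * (k:ℝ) - 1))) ^ ((2 * (k:ℝ) - 1) / (2 * (k:ℝ)))) ((∑ p ∈ s, ∑ a ∈ I p, v p a ^ 2) ^ ((1:ℝ)/2))) * P ^ (((k:ℝ) - 1) / (2 * (k:ℝ)))) ^ (2 * ((k:ℝ) / (2 * (k:ℝ) - 1))) := by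
    have h2 : (2:ℝ) ^ (2 * ((k:ℝ) / (2 * (k:ℝ) - 1)) - 1) * 2 = 2 ^ (2 * ((k:ℝ) / (2 * (k:ℝ) - 1))) := by
      rw [Real.rpow_sub two_pos, Real.rpow_one]; field_simp
    have expand : (2 * (max ((∑ p ∈ s, (∑ a ∈ I p, u p a ^ (2 * k)) ^ ((1:ℝ) / (2 * (k:ℝ) - 1))) ^ ((2 * (k:ℝ) - 1) / (2 * (k:ℝ)))) ((∑ p ∈ s, ∑ a ∈ I p, v p a ^ 2) ^ ((1:ℝ)/2))) * P ^ (((k:ℝ) - 1) / (2 * (k:ℝ)))) ^ (2 * ((k:ℝ) / (2 * (k:ℝ) - 1)))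
        = 2 ^ (2 * ((k:ℝ) / (2 * (k:ℝ) - 1))) * (max ((∑ p ∈ s, (∑ a ∈ I p, u p a ^ (2 * k)) ^ ((1:ℝ) / (2 * (k:ℝ) - 1))) ^ ((2 * (k:ℝ) - 1) / (2 * (k:ℝ)))) ((∑ p ∈ s, ∑ a ∈ I p, v p a ^ 2) ^ ((1:ℝ)/2))) ^ (2 * ((k:ℝ) / (2 * (k:ℝ) - 1))) * P ^ (((k:ℝ) - 1) / (2 * (k:ℝ) - 1)) := by
      rw [Real.mul_rpow (by positivity) (Real.rpow_nonneg hP0.le _),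
        Real.mul_rpow (by norm_num) hM0, ← Real.rpow_mul hP0.le,
        show (((k:ℝ) - 1) / (2 * (k:ℝ))) * (2 * ((k:ℝ) / (2 * (k:ℝ) - 1))) = (((k:ℝ) - 1) / (2 * (k:ℝ) - 1)) by field_simp <;> ring]
    calc (∑ p ∈ s, (∑ a ∈ I p, (u p a + v p a) ^ 2) ^ ((k:ℝ) / (2 * (k:ℝ) - 1))) ≤ ∑ p ∈ s, 2 ^ (2 * ((k:ℝ) / (2 * (k:ℝ) - 1)) - 1) * ((∑ a ∈ I p, u p a ^ 2) ^ ((k:ℝ) / (2 * (k:ℝ) - 1)) + (∑ a ∈ I p, v p a ^ 2) ^ ((k:ℝ) / (2 * (k:ℝ) - 1))) :=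
          Finset.sum_le_sum keyW
      _ = 2 ^ (2 * ((k:ℝ) / (2 * (k:ℝ) - 1)) - 1) * ((∑ p ∈ s, (∑ a ∈ I p, u p a ^ 2) ^ ((k:ℝ) / (2 * (k:ℝ) - 1))) + ∑ p ∈ s, (∑ a ∈ I p, v p a ^ 2) ^ ((k:ℝ) / (2 * (k:ℝ) - 1))) := by
          rw [← Finset.mul_sum, Finset.sum_add_distrib]
      _ ≤ 2 ^ (2 * ((k:ℝ) / (2 * (k:ℝ) - 1)) - 1) * ((P ^ (((k:ℝ) - 1) / (2 * (k:ℝ) - 1)) * (max ((∑ p ∈ s, (∑ a ∈ I p, u p a ^ (2 * k)) ^ ((1:ℝ) / (2 * (k:ℝ) - 1))) ^ ((2 * (k:ℝ) - 1) / (2 * (k:ℝ)))) ((∑ p ∈ s, ∑ a ∈ I p, v p a ^ 2) ^ ((1:ℝ)/2))) ^ (2 * ((k:ℝ) / (2 * (k:ℝ) - 1)))) + (P ^ (((k:ℝ) - 1) / (2 * (k:ℝ) - 1)) * (max ((∑ p ∈ s, (∑ a ∈ I p, u p a ^ (2 * k)) ^ ((1:ℝ) / (2 * (k:ℝ) - 1)))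 ^ ((2 * (k:ℝ) - 1) / (2 * (k:ℝ)))) ((∑ p ∈ s, ∑ a ∈ I p, v p a ^ 2) ^ ((1:ℝ)/2))) ^ (2 * ((k:ℝ) / (2 * (k:ℝ) - 1))))) := by
          apply mul_le_mul_of_nonneg_left ?_ (by positivity)
          apply add_le_add
          · calc ∑ p ∈ s, (∑ a ∈ I p, u p a ^ 2) ^ ((k:ℝ) / (2 * (k:ℝ) - 1)) ≤ ∑ p ∈ s, P ^ (((k:ℝ) - 1) / (2 * (k:ℝ) - 1)) * (∑ a ∈ I p, u p a ^ (2 * k)) ^ ((1:ℝ) / (2 * (k:ℝ) - 1)) :=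
                Finset.sum_le_sum keyX
              _ = P ^ (((k:ℝ) - 1) / (2 * (k:ℝ) - 1)) * (∑ p ∈ s, (∑ a ∈ I p, u p a ^ (2 * k)) ^ ((1:ℝ) / (2 * (k:ℝ) - 1))) := by rw [Finset.mul_sum]
              _ ≤ P ^ (((k:ℝ) - 1) / (2 * (k:ℝ) - 1)) * (max ((∑ p ∈ s, (∑ a ∈ I p, u p a ^ (2 * k)) ^ ((1:ℝ) / (2 * (k:ℝ) - 1))) ^ ((2 * (k:ℝ) - 1) / (2 * (k:ℝ)))) ((∑ p ∈ s, ∑ a ∈ I p, v p a ^ 2) ^ ((1:ℝ)/2))) ^ (2 * ((k:ℝ) / (2 * (k:ℝ) - 1))) :=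
                mul_le_mul_of_nonneg_left hSA_M (Real.rpow_nonneg hP0.le _)
          · exact keyY.trans
              (mul_le_mul_of_nonneg_left hSY_M (Real.rpow_nonneg hP0.le _))
      _ = (2 ^ (2 * ((k:ℝ) / (2 * (k:ℝ) - 1)) - 1) * 2) * (P ^ (((k:ℝ) - 1) / (2 * (k:ℝ) - 1)) * (max ((∑ p ∈ s, (∑ a ∈ I p, u p a ^ (2 * k)) ^ ((1:ℝ) / (2 * (k:ℝ) - 1))) ^ ((2 * (k:ℝ) - 1) / (2 * (k:ℝ)))) ((∑ p ∈ s, ∑ a ∈ I p, v p a ^ 2) ^ ((1:ℝ)/2))) ^ (2 * ((k:ℝ) / (2 * (k:ℝ) - 1)))) := by ring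
      _ = (2 * (max ((∑ p ∈ s, (∑ a ∈ I p, u p a ^ (2 * k)) ^ ((1:ℝ) / (2 * (k:ℝ) - 1))) ^ ((2 * (k:ℝ) - 1) / (2 * (k:ℝ)))) ((∑ p ∈ s, ∑ a ∈ I p, v p a ^ 2) ^ ((1:ℝ)/2))) * P ^ (((k:ℝ) - 1) / (2 * (k:ℝ)))) ^ (2 * ((k:ℝ) / (2 * (k:ℝ) - 1))) := by rw [h2, expand]; ring
  have step : (∑ p ∈ s, (∑ a ∈ I p, (u p a + v p a) ^ 2) ^ ((k:ℝ) / (2 * (k:ℝ) - 1))) ^ ((2 * (k:ℝ) - 1) / (2 * (k:ℝ))) ≤ 2 * (max ((∑ p ∈ s, (∑ a ∈ I p, u p a ^ (2 * k)) ^ ((1:ℝ) / (2 * (k:ℝ) - 1))) ^ ((2 * (k:ℝ) - 1) / (2 * (k:ℝ)))) ((∑ p ∈ s, ∑ a ∈ I p, v p a ^ 2) ^ ((1:ℝ)/2))) * P ^ (((k:ℝ) - 1) / (2 * (k:ℝ))) := by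
    have hTC : (2 * ((k:ℝ) / (2 * (k:ℝ) - 1))) * ((2 * (k:ℝ) - 1) / (2 * (k:ℝ))) = 1 := by field_simp <;> ring
    calc (∑ p ∈ s, (∑ a ∈ I p, (u p a + v p a) ^ 2) ^ ((k:ℝ) / (2 * (k:ℝ) - 1))) ^ ((2 * (k:ℝ) - 1) / (2 * (k:ℝ))) ≤ ((2 * (max ((∑ p ∈ s, (∑ a ∈ I p, u p a ^ (2 * k)) ^ ((1:ℝ) / (2 * (k:ℝ) - 1))) ^ ((2 * (k:ℝ) - 1) / (2 * (k:ℝ)))) ((∑ p ∈ s, ∑ a ∈ I p, v p a ^ 2) ^ ((1:ℝ)/2))) * P ^ (((k:ℝ) - 1) / (2 * (k:ℝ)))) ^ (2 * ((k:ℝ) / (2 * (k:ℝ) - 1)))) ^ ((2 * (k:ℝ) - 1) / (2 * (k:ℝ))) :=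
          Real.rpow_le_rpow hSWW0 hSW_le hc0
      _ = (2 * (max ((∑ p ∈ s, (∑ a ∈ I p, u p a ^ (2 * k)) ^ ((1:ℝ) / (2 * (k:ℝ) - 1))) ^ ((2 * (k:ℝ) - 1) / (2 * (k:ℝ)))) ((∑ p ∈ s, ∑ a ∈ I p, v p a ^ 2) ^ ((1:ℝ)/2))) * P ^ (((k:ℝ) - 1) / (2 * (k:ℝ)))) ^ ((2 * ((k:ℝ) / (2 * (k:ℝ) - 1))) * ((2 * (k:ℝ) - 1) / (2 * (k:ℝ)))) := (Real.rpow_mul (by positivity) _ _).symm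
      _ = 2 * (max ((∑ p ∈ s, (∑ a ∈ I p, u p a ^ (2 * k)) ^ ((1:ℝ) / (2 * (k:ℝ) - 1))) ^ ((2 * (k:ℝ) - 1) / (2 * (k:ℝ)))) ((∑ p ∈ s, ∑ a ∈ I p, v p a ^ 2) ^ ((1:ℝ)/2))) * P ^ (((k:ℝ) - 1) / (2 * (k:ℝ))) := by rw [hTC, Real.rpow_one]
  calc P ^ (-(((k:ℝ) - 1) / (2 * (k:ℝ)))) * (∑ p ∈ s, (∑ a ∈ I p, (u p a + v p a) ^ 2) ^ ((k:ℝ) / (2 * (k:ℝ) - 1))) ^ ((2 * (k:ℝ) - 1) / (2 * (k:ℝ))) ≤ P ^ (-(((k:ℝ) - 1) / (2 * (k:ℝ)))) * (2 * (max ((∑ p ∈ s, (∑ a ∈ I p, u p a ^ (2 * k)) ^ ((1:ℝ) / (2 * (k:ℝ) - 1))) ^ ((2 * (k:ℝ) - 1) / (2 * (k:ℝ)))) ((∑ p ∈ s, ∑ a ∈ I p, v p a ^ 2) ^ ((1:ℝ)/2))) * P ^ (((k:ℝ) - 1) / (2 * (k:ℝ)))) :=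
        mul_le_mul_of_nonneg_left step (Real.rpow_nonneg hP0.le _)
    _ = 2 * (max ((∑ p ∈ s, (∑ a ∈ I p, u p a ^ (2 * k)) ^ ((1:ℝ) / (2 * (k:ℝ) - 1))) ^ ((2 * (k:ℝ) - 1) / (2 * (k:ℝ)))) ((∑ p ∈ s, ∑ a ∈ I p, v p a ^ 2) ^ ((1:ℝ)/2))) * (P ^ (-(((k:ℝ) - 1) / (2 * (k:ℝ)))) * P ^ (((k:ℝ) - 1) / (2 * (k:ℝ)))) := by ring
    _ = 2 * (max ((∑ p ∈ s, (∑ a ∈ I p, u p a ^ (2 * k)) ^ ((1:ℝ) / (2 * (k:ℝ) - 1))) ^ ((2 * (k:ℝ) - 1) / (2 * (k:ℝ)))) ((∑ p ∈ s, ∑ a ∈ I p, v p a ^ 2) ^ ((1:ℝ)/2))) := by rw [← Real.rpow_add hP0]; norm_num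


theorem dual_norm_lower_bound (k : ℕ) (hk : 0 < k) (P : ℝ) (hP : 1 ≤ P)
    (h h1 h2 : ℕ → ℕ → ℂ)
    (hsum : ∀ p ∈ primesUpTo P, ∀ a ∈ Finset.Icc 1 (p - 1),
      h p a = h1 p a + h2 p a) :
    2 * max
        ((∑ p ∈ primesUpTo P,
            (∑ a ∈ Finset.Icc 1 (p - 1), ‖h1 p a‖ ^ (2 * k)) ^
              ((1 : ℝ) / (2 * k - 1))) ^ ((2 * (k : ℝ) - 1) / (2 * k)))
        ((∑ p ∈ primesUpTo P,
            ∑ a ∈ Finset.Icc 1 (p - 1), ‖h2 p a‖ ^ 2) ^ ((1 : ℝ) / 2)) ≥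
      P ^ (-(((k : ℝ) - 1) / (2 * k))) *
        (∑ p ∈ primesUpTo P,
            (∑ a ∈ Finset.Icc 1 (p - 1), ‖h p a‖ ^ 2) ^
              ((k : ℝ) / (2 * k - 1))) ^ ((2 * (k : ℝ) - 1) / (2 * k)) := by
  have hP0 : (0:ℝ) < P := lt_of_lt_of_le one_pos hP
  have hkr1 : (1:ℝ) ≤ (k:ℝ) := by exact_mod_cast hk
  set s := primesUpTo P with hs
  have hmem : ∀ p ∈ s, p ≤ ⌊P⌋₊ ∧ p.Prime := by
    intro p hp
    rw [hs, primesUpTo, Finset.mem_filter, Finset.mem_range] at hp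
    exact ⟨by omega, hp.2⟩
  have hIcard : ∀ p ∈ s, (((Finset.Icc 1 (p-1)).card : ℝ)) ≤ P := by
    intro p hp
    rw [Nat.card_Icc]
    have h1' := (hmem p hp).1
    calc (((p-1) + 1 - 1 : ℕ) : ℝ) ≤ (⌊P⌋₊ : ℝ) := by
          have : (p-1) + 1 - 1 ≤ ⌊P⌋₊ := by omega
          exact_mod_cast this
      _ ≤ P := Nat.floor_le hP0.le
  have hcard : (s.card : ℝ) ≤ P := by
    have hsub : s ⊆ Finset.Icc 1 ⌊P⌋₊ := by
      intro p hp
      have := hmem p hp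
      rw [Finset.mem_Icc]
      exact ⟨this.2.one_lt.le, this.1⟩
    calc (s.card : ℝ) ≤ ((Finset.Icc 1 ⌊P⌋₊).card : ℝ) := by
          exact_mod_cast Finset.card_le_card hsub
      _ = (⌊P⌋₊ : ℝ) := by rw [Nat.card_Icc]; norm_num
      _ ≤ P := Nat.floor_le hP0.le
  have key := key_ineq k hk P hP s _ hcard hIcard
    (fun p a => ‖h1 p a‖) (fun p a => ‖h2 p a‖)
  rw [ge_iff_le]
  refine le_trans ?_ key
  have hexp1 : (0:ℝ) ≤ (k:ℝ) / (2 * (k:ℝ) - 1) := by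
    apply div_nonneg (by positivity); linarith
  have hexp2 : (0:ℝ) ≤ (2 * (k:ℝ) - 1) / (2 * (k:ℝ)) := by
    apply div_nonneg (by linarith); linarith
  apply mul_le_mul_of_nonneg_left ?_ (Real.rpow_nonneg hP0.le _)
  apply Real.rpow_le_rpow (Finset.sum_nonneg fun p _ =>
    Real.rpow_nonneg (Finset.sum_nonneg fun a _ => sq_nonneg _) _) ?_ hexp2
  apply Finset.sum_le_sum
  intro p hp
  apply Real.rpow_le_rpow (Finset.sum_nonneg fun a _ => sq_nonneg _) ?_ hexp1
  apply Finset.sum_le_sum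
  intro a ha
  rw [hsum p hp a ha]
  have hn := norm_add_le (h1 p a) (h2 p a)
  have h0 : (0:ℝ) ≤ ‖h1 p a + h2 p a‖ := norm_nonneg _
  calc ‖h1 p a + h2 p a‖ ^ 2 ≤ (‖h1 p a‖ + ‖h2 p a‖) ^ 2 := by nlinarith
    _ = ((fun p a => ‖h1 p a‖) p a + (fun p a => ‖h2 p a‖) p a) ^ 2 := rfl
end
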